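/- Let H be a complex separable Hilbert space, K a bounded linear operator on H, (f_k)_{k∈I} a Bessel sequence in H with Bessel bound B > 0, and (g_k)_{k∈I} a Bessel sequence in H such that for every x ∈ H the family (⟨g_k, x⟩ f_k)_{k∈I} is unconditionally summable with sum Kx. Then for every x ∈ H one has B⁻¹‖Kx‖² ≤ Σ_{k∈I} |⟨g_k, x⟩|²; in particular (g_k) is a K*-frame with lower bound B⁻¹. -/

import Mathlib

open ContinuousLinearMap

/-- If `(f k)` is a Bessel sequence with bound `B > 0`, `(g k)` a Bessel
sequence, and `∑ₖ ⟨g k, x⟩ • f k = K x` unconditionally for all `x`, then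
`B⁻¹ ‖K x‖² ≤ ∑ₖ |⟨g k, x⟩|²`, i.e. `(g k)` is a `K*`-frame with lower bound `B⁻¹`. -/
theorem kframe_dual_lower_bound
    {H : Type*} [NormedAddCommGroup H] [InnerProductSpace ℂ H]
    [CompleteSpace H] [TopologicalSpace.SeparableSpace H]
    {I : Type*} [Countable I]
    (K : H →L[ℂ] H) (f g : I → H) (B : ℝ) (hB : 0 < B)
    (hf : ∀ x : H, Summable (fun k => ‖(inner ℂ (f k) x : ℂ)‖ ^ 2) ∧
      ∑' k, ‖(inner ℂ (f k) x : ℂ)‖ ^ 2 ≤ B * ‖x‖ ^ 2)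
    (hg : ∃ D : ℝ, 0 < D ∧ ∀ x : H, Summable (fun k => ‖(inner ℂ (g k) x : ℂ)‖ ^ 2) ∧
      ∑' k, ‖(inner ℂ (g k) x : ℂ)‖ ^ 2 ≤ D * ‖x‖ ^ 2)
    (hdual : ∀ x : H, HasSum (fun k => (inner ℂ (g k) x : ℂ) • f k) (K x)) :
    ∀ x : H, B⁻¹ * ‖K x‖ ^ 2 ≤ ∑' k, ‖(inner ℂ (g k) x : ℂ)‖ ^ 2 := by
  intro x
  set c : I → ℂ := fun k => inner ℂ (g k) x with hc
  set a : I → ℂ := fun k => inner ℂ (K x) (f k) with ha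
  -- summability facts
  obtain ⟨hfK, hfK2⟩ := hf (K x)
  obtain ⟨D, hD, hgS⟩ := hg
  obtain ⟨hgx, _⟩ := hgS x
  have hanorm : ∀ k, ‖a k‖ = ‖(inner ℂ (f k) (K x) : ℂ)‖ := fun k => norm_inner_symm _ _
  have hsuma : Summable (fun k => ‖a k‖ ^ 2) := by
    simpa [hanorm] using hfK
  have hTa : ∑' k, ‖a k‖ ^ 2 ≤ B * ‖K x‖ ^ 2 := by
    calc ∑' k, ‖a k‖ ^ 2 = ∑' k, ‖(inner ℂ (f k) (K x) : ℂ)‖ ^ 2 := by simp [hanorm]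
    _ ≤ B * ‖K x‖ ^ 2 := hfK2
  -- the key series identity
  have hsum : HasSum (fun k => c k * a k) ((‖K x‖ : ℂ) ^ 2) := by
    have h := (hdual x).mapL (innerSL ℂ (K x))
    have : (innerSL ℂ (K x)) (K x) = (‖K x‖ : ℂ) ^ 2 := by
      simp [innerSL_apply_apply, inner_self_eq_norm_sq_to_K]
    rw [this] at h
    simpa [inner_smul_right, mul_comm] using h
  have hbound : ∀ k, ‖c k * a k‖ ≤ (B * ‖c k‖ ^ 2 + B⁻¹ * ‖a k‖ ^ 2) / 2 := by
    intro k
    rw [norm_mul]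
    have h1 : (0:ℝ) ≤ ‖c k‖ := norm_nonneg _
    have h2 : (0:ℝ) ≤ ‖a k‖ := norm_nonneg _
    have hBi : B * B⁻¹ = 1 := mul_inv_cancel₀ hB.ne'
    nlinarith [sq_nonneg (B * ‖c k‖ - ‖a k‖), inv_pos.mpr hB, sq_nonneg (‖c k‖ - ‖a k‖)]
  have hsumRHS : Summable (fun k => (B * ‖c k‖ ^ 2 + B⁻¹ * ‖a k‖ ^ 2) / 2) :=
    (((hgx.mul_left B).add (hsuma.mul_left B⁻¹)).div_const 2)
  have hsumca : Summable (fun k => ‖c k * a k‖) :=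
    Summable.of_nonneg_of_le (fun k => norm_nonneg _) hbound hsumRHS
  have key : ‖K x‖ ^ 2 ≤ ∑' k, ‖c k * a k‖ := by
    have := norm_tsum_le_tsum_norm (f := fun k => c k * a k) hsumca
    have heq : ∑' k, c k * a k = (‖K x‖ : ℂ) ^ 2 := hsum.tsum_eq
    rw [heq] at this
    simpa using this
  have step2 : ∑' k, ‖c k * a k‖ ≤ (B * ∑' k, ‖c k‖ ^ 2 + B⁻¹ * ∑' k, ‖a k‖ ^ 2) / 2 := by
    calc ∑' k, ‖c k * a k‖ ≤ ∑' k, (B * ‖c k‖ ^ 2 + B⁻¹ * ‖a k‖ ^ 2) / 2 :=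
          Summable.tsum_le_tsum hbound hsumca hsumRHS
    _ = (B * ∑' k, ‖c k‖ ^ 2 + B⁻¹ * ∑' k, ‖a k‖ ^ 2) / 2 := by
          rw [tsum_div_const, Summable.tsum_add (hgx.mul_left B) (hsuma.mul_left B⁻¹),
            tsum_mul_left, tsum_mul_left]
  have hBi : B * B⁻¹ = 1 := mul_inv_cancel₀ hB.ne'
  have h3 : B⁻¹ * ∑' k, ‖a k‖ ^ 2 ≤ ‖K x‖ ^ 2 := by
    have := mul_le_mul_of_nonneg_left hTa (le_of_lt (inv_pos.mpr hB))
    calc B⁻¹ * ∑' k, ‖a k‖ ^ 2 ≤ B⁻¹ * (B * ‖K x‖ ^ 2) := this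
    _ = ‖K x‖ ^ 2 := by field_simp
  have final : ‖K x‖ ^ 2 ≤ B * ∑' k, ‖c k‖ ^ 2 := by linarith
  have := mul_le_mul_of_nonneg_left final (le_of_lt (inv_pos.mpr hB))
  calc B⁻¹ * ‖K x‖ ^ 2 ≤ B⁻¹ * (B * ∑' k, ‖c k‖ ^ 2) := this
  _ = ∑' k, ‖c k‖ ^ 2 := by field_simp
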